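/- arXiv:2204.01434 — 8 statements merged into one kernel-verified Lean document; each statement's English description precedes it below -/
import Mathlib

section
/- For any relation A on the real Hilbert space H = L²([0,∞); ℝ), the nonzero part of the Scaled Relative Graph of the relational inverse A⁻¹ is the image of the nonzero part of the Scaled Relative Graph of A under complex inversion: {z ∈ SRG(A⁻¹) : z ≠ 0} = {z⁻¹ : z ∈ SRG(A), z ≠ 0}. -/
open MeasureTheory RealInnerProductSpace

noncomputable section

/-- The real Hilbert space `H = L²([0,∞); ℝ)`. -/
abbrev H : Type := Lp ℝ 2 (volume.restrict (Set.Ici (0:ℝ)))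

/-- The Scaled Relative Graph of a relation `A ⊆ H × H`. -/
def SRG (A : Set (H × H)) : Set ℂ :=
  {z | ∃ u₁ u₂ y₁ y₂ : H, u₁ ≠ u₂ ∧ (u₁, y₁) ∈ A ∧ (u₂, y₂) ∈ A ∧
      ‖z‖ * ‖u₁ - u₂‖ = ‖y₁ - y₂‖ ∧
      z.re * ‖u₁ - u₂‖ ^ 2 = ⟪u₁ - u₂, y₁ - y₂⟫}

/-- The relational inverse `A⁻¹ = {(y, u) : (u, y) ∈ A}`. -/
def relInv (A : Set (H × H)) : Set (H × H) := {p | (p.2, p.1) ∈ A}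

lemma srg_inv_mem (A : Set (H × H)) {z : ℂ} (hz : z ∈ SRG A) (hz0 : z ≠ 0) :
    z⁻¹ ∈ SRG (relInv A) := by
  obtain ⟨u₁, u₂, y₁, y₂, hne, h1, h2, habs, hre⟩ := hz
  have ha : (0:ℝ) < ‖u₁ - u₂‖ := by rwa [norm_pos_iff, sub_ne_zero]
  have hzabs : (0:ℝ) < ‖z‖ := by
    simpa [AbsoluteValue.pos_iff] using hz0
  have hb : (0:ℝ) < ‖y₁ - y₂‖ := by rw [← habs]; positivity
  refine ⟨y₁, y₂, u₁, u₂, ?_, h1, h2, ?_, ?_⟩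
  · intro h; rw [h] at hb; simp at hb
  · rw [norm_inv, ← habs]
    field_simp
  · rw [real_inner_comm, ← hre, ← habs, Complex.inv_re, Complex.normSq_eq_norm_sq]
    field_simp

theorem srg_inv (A : Set (H × H)) :
    {z ∈ SRG (relInv A) | z ≠ 0} = {w : ℂ | ∃ z ∈ SRG A, z ≠ 0 ∧ w = z⁻¹} := by
  ext w
  constructor
  · rintro ⟨hw, hw0⟩
    have : relInv (relInv A) = A := rfl
    refine ⟨w⁻¹, ?_, inv_ne_zero hw0, (inv_inv w).symm⟩
    have := srg_inv_mem (relInv A) hw hw0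
    rwa [show relInv (relInv A) = A from rfl] at this
  · rintro ⟨z, hz, hz0, rfl⟩
    exact ⟨srg_inv_mem A hz hz0, inv_ne_zero hz0⟩
end
end

section
/- Let A and B be relations on the real Hilbert space H = L²([0,∞); ℝ), and let S ⊆ ℂ be a set satisfying the chord property with SRG(B) ⊆ S. Then SRG(A + B) ⊆ SRG(A) + S, where the right-hand side is the Minkowski sum {a + s : a ∈ SRG(A), s ∈ S}. -/
open MeasureTheory RealInnerProductSpace Pointwise

noncomputable section

/-- The sum of two relations: `A + B = {(x, y + z) : (x, y) ∈ A, (x, z) ∈ B}`. -/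
def relAdd (A B : Set (H × H)) : Set (H × H) :=
  {p | ∃ y z : H, (p.1, y) ∈ A ∧ (p.1, z) ∈ B ∧ p.2 = y + z}

/-- A set `G ⊆ ℂ` satisfies the chord property if `z ∈ G` implies that the
segment `[z, conj z]` is contained in `G`. -/
def ChordProperty (G : Set ℂ) : Prop :=
  ∀ z ∈ G, ∀ α : ℝ, α ∈ Set.Icc (0:ℝ) 1 →
    (α : ℂ) * z + ((1 : ℂ) - (α : ℂ)) * (starRingEnd ℂ z) ∈ G

lemma sq_eq' {x y : ℝ} (hx : 0 ≤ x) (hy : 0 ≤ y) (h : x^2 = y^2) : x = y := by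
  rw [← Real.sqrt_sq hx, ← Real.sqrt_sq hy, h]

lemma pythag (u y : H) (hu : u ≠ 0) :
    ‖y‖^2 = (⟪u,y⟫/‖u‖^2)^2 * ‖u‖^2 + ‖y - (⟪u,y⟫/‖u‖^2) • u‖^2 := by
  have hn : ‖u‖ ≠ 0 := norm_ne_zero_iff.mpr hu
  set c : ℝ := ⟪u,y⟫/‖u‖^2 with hc
  have horth : ⟪c • u, y - c • u⟫ = 0 := by
    rw [real_inner_smul_left, inner_sub_right, real_inner_smul_right,
      real_inner_self_eq_norm_sq]
    rw [hc]; field_simp; ring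
  have hdec : y = c • u + (y - c • u) := by abel
  calc ‖y‖^2 = ‖c • u + (y - c • u)‖^2 := by rw [← hdec]
    _ = ‖c • u‖^2 + 2 * ⟪c • u, y - c • u⟫ + ‖y - c • u‖^2 := norm_add_sq_real _ _
    _ = c^2 * ‖u‖^2 + ‖y - c • u‖^2 := by
        rw [horth, norm_smul]; simp [mul_pow, sq_abs]

theorem srg_add_subset (A B : Set (H × H)) (S : Set ℂ)
    (hS : ChordProperty S) (hBS : SRG B ⊆ S) :
    SRG (relAdd A B) ⊆ SRG A + S := by
  intro z hz
  obtain ⟨u₁, u₂, w₁, w₂, hne, h1, h2, habs, hre⟩ := hz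
  obtain ⟨y₁, v₁, hy₁, hv₁, hw₁⟩ := h1
  obtain ⟨y₂, v₂, hy₂, hv₂, hw₂⟩ := h2
  set u : H := u₁ - u₂ with hudef
  set y : H := y₁ - y₂ with hydef
  set v : H := v₁ - v₂ with hvdef
  have hu : u ≠ 0 := sub_ne_zero.mpr hne
  have hnu : (0:ℝ) < ‖u‖ := norm_pos_iff.mpr hu
  have hn : ‖u‖ ≠ 0 := ne_of_gt hnu
  have hw : w₁ - w₂ = y + v := by
    simp only at hw₁ hw₂
    rw [hw₁, hw₂, hydef, hvdef]; abel
  set nu : ℝ := ‖u‖ with hnudef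
  set a : ℝ := ⟪u,y⟫/nu^2 with ha
  set b : ℝ := ⟪u,v⟫/nu^2 with hb
  set py : ℝ := ‖y - a • u‖ with hpy
  set pv : ℝ := ‖v - b • u‖ with hpv
  set pw : ℝ := ‖(y - a • u) + (v - b • u)‖ with hpw
  have Hy : ‖y‖^2 = a^2 * nu^2 + py^2 := pythag u y hu
  have Hv : ‖v‖^2 = b^2 * nu^2 + pv^2 := pythag u v hu
  have hsum : ⟪u, y + v⟫ = (a + b) * nu^2 := by
    rw [inner_add_right, ha, hb]; field_simp
  have Hw : ‖y + v‖^2 = (a + b)^2 * nu^2 + pw^2 := by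
    have := pythag u (y + v) hu
    rw [hsum] at this
    have hq : (a + b) * nu ^ 2 / nu ^ 2 = a + b := by field_simp
    rw [hq] at this
    have hvv : (y + v) - (a + b) • u = (y - a • u) + (v - b • u) := by
      rw [add_smul]; abel
    rw [hvv] at this
    exact this
  -- Re z = a + b
  have hreab : z.re = a + b := by
    rw [hw, hsum] at hre
    have := mul_right_cancel₀ (pow_ne_zero 2 hn) hre
    exact this
  -- |Im z| * nu = pw
  have himsq : z.im^2 * nu^2 = pw^2 := by
    have h2 : (‖z‖ * nu)^2 = ‖y + v‖^2 := by rw [habs, hw]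
    have h3 : (‖z‖)^2 = z.re^2 + z.im^2 := by
      rw [Complex.sq_norm, Complex.normSq_apply]; ring
    rw [mul_pow, h3, Hw, hreab] at h2
    linear_combination h2
  have him : |z.im| * nu = pw := by
    apply sq_eq' (by positivity) (norm_nonneg _)
    rw [mul_pow, sq_abs, himsq]
  -- triangle inequalities
  have ht1 : pw ≤ py + pv := norm_add_le _ _
  have ht2 : py ≤ pw + pv := by
    have : y - a • u = ((y - a • u) + (v - b • u)) - (v - b • u) := by abel
    calc py = ‖((y - a • u) + (v - b • u)) - (v - b • u)‖ := by rw [hpy, ← this]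
      _ ≤ pw + pv := norm_sub_le _ _
  set P : ℝ := py / nu with hP
  set Q : ℝ := pv / nu with hQ
  set T : ℝ := z.im with hT
  have hP0 : 0 ≤ P := by positivity
  have hQ0 : 0 ≤ Q := by positivity
  have hTle : |T| ≤ P + Q := by
    rw [hP, hQ]
    rw [← him] at ht1
    rw [← add_div, le_div_iff₀ hnu]
    linarith
  have hPle : P ≤ |T| + Q := by
    rw [hP, hQ]
    rw [← him] at ht2
    rw [div_le_iff₀ hnu]
    have : (|T| + pv / nu) * nu = |T| * nu + pv := by field_simp
    rw [this]
    linarith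
  set ε : ℝ := if 0 ≤ T then 1 else -1 with hε
  set μ : ℝ := T - ε * P with hμ
  have hμQ : |μ| ≤ Q := by
    rw [abs_le]
    rcases le_or_gt 0 T with hT0 | hT0
    · rw [abs_of_nonneg hT0] at hTle hPle
      simp only [hε, if_pos hT0] at hμ
      constructor <;> [skip; skip] <;> rw [hμ] <;> linarith
    · rw [abs_of_neg hT0] at hTle hPle
      simp only [hε, if_neg (not_le.mpr hT0)] at hμ
      constructor <;> rw [hμ] <;> linarith
  set zA : ℂ := ⟨a, ε * P⟩ with hzA
  set zB : ℂ := ⟨b, Q⟩ with hzB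
  set s : ℂ := ⟨b, μ⟩ with hs
  have hε2 : ε^2 = 1 := by rw [hε]; split_ifs <;> norm_num
  -- zA ∈ SRG A
  have hzAmem : zA ∈ SRG A := by
    refine ⟨u₁, u₂, y₁, y₂, hne, hy₁, hy₂, ?_, ?_⟩
    · apply sq_eq' (by positivity) (norm_nonneg _)
      have : (‖zA‖)^2 = a^2 + (ε * P)^2 := by
        rw [Complex.sq_norm, Complex.normSq_mk]; ring
      rw [mul_pow, this]
      have hPp : (ε * P)^2 = py^2 / nu^2 := by
        rw [mul_pow, hε2, hP]; field_simp
      rw [hPp]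
      show (a^2 + py^2/nu^2) * nu^2 = ‖y‖^2
      rw [Hy]; field_simp
    · show zA.re * nu^2 = ⟪u, y⟫
      rw [hzA]
      show a * nu^2 = ⟪u, y⟫
      rw [ha]; field_simp
  -- zB ∈ SRG B
  have hzBmem : zB ∈ SRG B := by
    refine ⟨u₁, u₂, v₁, v₂, hne, hv₁, hv₂, ?_, ?_⟩
    · apply sq_eq' (by positivity) (norm_nonneg _)
      have : (‖zB‖)^2 = b^2 + Q^2 := by
        rw [Complex.sq_norm, Complex.normSq_mk]; ring
      rw [mul_pow, this]
      have hQp : Q^2 = pv^2 / nu^2 := by rw [hQ]; field_simp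
      rw [hQp]
      show (b^2 + pv^2/nu^2) * nu^2 = ‖v‖^2
      rw [Hv]; field_simp
    · show zB.re * nu^2 = ⟪u, v⟫
      rw [hzB]
      show b * nu^2 = ⟪u, v⟫
      rw [hb]; field_simp
  -- s ∈ S
  have hsS : s ∈ S := by
    rcases eq_or_lt_of_le hQ0 with hQ0' | hQpos
    · -- Q = 0, μ = 0, s = zB
      have hμ0 : μ = 0 := by
        have h0 : |μ| ≤ 0 := by rw [hQ0']; exact hμQ
        exact abs_eq_zero.mp (le_antisymm h0 (abs_nonneg μ))
      have : s = zB := by rw [hs, hzB, ← hQ0', hμ0]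
      rw [this]; exact hBS hzBmem
    · have hα : (μ + Q) / (2 * Q) ∈ Set.Icc (0:ℝ) 1 := by
        rw [abs_le] at hμQ
        constructor
        · apply div_nonneg (by linarith) (by linarith)
        · rw [div_le_one (by linarith)]; linarith
      have hmem := hS zB (hBS hzBmem) _ hα
      have key : ∀ (α bb qq : ℝ), ((α:ℂ) * ⟨bb, qq⟩ +
          ((1:ℂ) - (α:ℂ)) * (starRingEnd ℂ (⟨bb, qq⟩ : ℂ))) = ⟨bb, (2*α - 1)*qq⟩ := by
        intro α bb qq
        apply Complex.ext <;>
          simp only [Complex.add_re, Complex.add_im, Complex.mul_re, Complex.mul_im,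
            Complex.sub_re, Complex.sub_im, Complex.one_re, Complex.one_im,
            Complex.conj_re, Complex.conj_im, Complex.ofReal_re, Complex.ofReal_im] <;>
          ring
      rw [hzB] at hmem
      rw [key] at hmem
      have hμeq : (2 * ((μ + Q)/(2*Q)) - 1) * Q = μ := by
        field_simp
        ring
      rw [hμeq] at hmem
      rw [hs]
      exact hmem
  -- conclusion
  refine Set.mem_add.mpr ⟨zA, hzAmem, s, hsS, ?_⟩
  apply Complex.ext
  · show zA.re + s.re = z.re
    rw [hzA, hs, hreab]
  · show zA.im + s.im = z.im
    rw [hzA, hs]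
    show ε * P + μ = T
    rw [hμ]; ring
end
end

section
/- Let A be a relation on the real Hilbert space H = L²([0,∞); ℝ) and let γ > 0. Then SRG(A) is contained in the closed disc {z ∈ ℂ : |z − γ/2| ≤ γ/2} if and only if γ⟪u₁−u₂, y₁−y₂⟫ ≥ ‖y₁−y₂‖² for all u₁, u₂ ∈ H with u₁ ≠ u₂ and all y₁ ∈ A(u₁), y₂ ∈ A(u₂). -/
open MeasureTheory RealInnerProductSpace

noncomputable section

theorem srg_subset_disc_iff_secantGain (A : Set (H × H)) (γ : ℝ) (hγ : 0 < γ) :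
    SRG A ⊆ {z : ℂ | ‖z - (γ/2 : ℝ)‖ ≤ γ/2} ↔
      ∀ u₁ u₂ y₁ y₂ : H, u₁ ≠ u₂ → (u₁, y₁) ∈ A → (u₂, y₂) ∈ A →
        γ * ⟪u₁ - u₂, y₁ - y₂⟫ ≥ ‖y₁ - y₂‖ ^ 2 := by
  constructor
  · intro h u₁ u₂ y₁ y₂ hne h₁ h₂
    set d := ‖u₁ - u₂‖ with hd
    set n := ‖y₁ - y₂‖ with hn
    set p := (⟪u₁ - u₂, y₁ - y₂⟫ : ℝ) with hp
    have hd0 : 0 < d := by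
      rw [hd, norm_pos_iff, sub_ne_zero]; exact hne
    have hn0 : 0 ≤ n := norm_nonneg _
    have hcs : |p| ≤ d * n := abs_real_inner_le_norm _ _
    have hs : 0 ≤ n ^ 2 / d ^ 2 - (p / d ^ 2) ^ 2 := by
      have : p ^ 2 ≤ d ^ 2 * n ^ 2 := by
        have := sq_le_sq' (neg_le_of_abs_le hcs) (le_of_abs_le hcs)
        nlinarith
      have hd2 : 0 < d ^ 2 := by positivity
      rw [div_pow, sub_nonneg, div_le_div_iff₀ (by positivity) (by positivity)]
      nlinarith
    set z : ℂ := ⟨p / d ^ 2, Real.sqrt (n ^ 2 / d ^ 2 - (p / d ^ 2) ^ 2)⟩ with hz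
    have habs : ‖z‖ = n / d := by
      rw [Complex.norm_def, Complex.normSq_apply]
      have him : z.im * z.im = n ^ 2 / d ^ 2 - (p / d ^ 2) ^ 2 := Real.mul_self_sqrt hs
      have hre : z.re = p / d ^ 2 := rfl
      have : z.re * z.re + z.im * z.im = n ^ 2 / d ^ 2 := by rw [him, hre]; ring
      rw [this]
      rw [show n ^ 2 / d ^ 2 = (n / d) ^ 2 by ring]
      exact Real.sqrt_sq (by positivity)
    have hzmem : z ∈ SRG A := by
      refine ⟨u₁, u₂, y₁, y₂, hne, h₁, h₂, ?_, ?_⟩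
      · rw [habs]; field_simp
        rw [hd, hn]; ring
      · simp only [hz]; field_simp
        rw [hp, hd]; ring
    have hdisc := h hzmem
    simp only [Set.mem_setOf_eq] at hdisc
    have hsq : ‖z - (γ/2 : ℝ)‖ ^ 2 ≤ (γ/2) ^ 2 := by
      have := norm_nonneg (z - (γ/2 : ℝ))
      nlinarith
    rw [Complex.sq_norm, Complex.normSq_apply] at hsq
    simp only [Complex.sub_re, Complex.sub_im, Complex.ofReal_re, Complex.ofReal_im, sub_zero] at hsq
    rw [Real.mul_self_sqrt hs] at hsq
    have hd2 : 0 < d ^ 2 := by positivity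
    have key : n ^ 2 / d ^ 2 ≤ γ * (p / d ^ 2) := by nlinarith
    rw [ge_iff_le]
    calc n ^ 2 = n ^ 2 / d ^ 2 * d ^ 2 := by field_simp
    _ ≤ γ * (p / d ^ 2) * d ^ 2 := mul_le_mul_of_nonneg_right key hd2.le
    _ = γ * p := by field_simp
  · intro h z hz
    obtain ⟨u₁, u₂, y₁, y₂, hne, h₁, h₂, habs, hre⟩ := hz
    have hkey := h u₁ u₂ y₁ y₂ hne h₁ h₂
    have hd0 : 0 < ‖u₁ - u₂‖ := by rw [norm_pos_iff, sub_ne_zero]; exact hne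
    have hzz : ‖z‖ ^ 2 ≤ γ * z.re := by
      have h1 : (‖z‖) ^ 2 * ‖u₁ - u₂‖ ^ 2 = ‖y₁ - y₂‖ ^ 2 := by
        rw [← habs]; ring
      have hd2 : 0 < ‖u₁ - u₂‖ ^ 2 := by positivity
      rw [← mul_le_mul_iff_of_pos_right hd2]
      calc ‖z‖ ^ 2 * ‖u₁ - u₂‖ ^ 2 = ‖y₁ - y₂‖ ^ 2 := h1
      _ ≤ γ * ⟪u₁ - u₂, y₁ - y₂⟫ := hkey
      _ = γ * z.re * ‖u₁ - u₂‖ ^ 2 := by rw [← hre]; ring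
    simp only [Set.mem_setOf_eq]
    have habs2 : ‖z - (γ/2 : ℝ)‖ ^ 2 ≤ (γ/2) ^ 2 := by
      rw [Complex.sq_norm, Complex.normSq_apply]
      simp only [Complex.sub_re, Complex.sub_im, Complex.ofReal_re, Complex.ofReal_im, sub_zero]
      have := Complex.sq_norm z
      rw [Complex.normSq_apply] at this
      nlinarith
    have := norm_nonneg (z - (γ/2 : ℝ))
    nlinarith
end
end

section
/- Let R₀, R₁, …, R_n and G₀, G₁, …, G_{n−1} be relations on the real Hilbert space H = L²([0,∞); ℝ). Define the nested circuit relations recursively by C_n := R_n and C_j := R_j + (G_j + (C_{j+1})⁻¹)⁻¹ for j = n−1, …, 0, and set C := C₀. If every G_j is input-strictly incrementally positive (i.e. μ_j-input strictly incrementally positive for some μ_j > 0) and every R_j is output-strictly incrementally positive (i.e. has incremental secant gain γ_j for some γ_j > 0), then C is output-strictly incrementally positive (has some finite incremental secant gain) and C⁻¹ is input-strictly incrementally positive (is μ-input strictly incrementally positive for some μ > 0). -/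
open MeasureTheory RealInnerProductSpace

noncomputable section

/-- `A` is `μ`-input strictly incrementally positive (`μ`-coercive). -/
def InputStrictlyPositive (A : Set (H × H)) (μ : ℝ) : Prop :=
  ∀ u₁ y₁ u₂ y₂ : H, (u₁, y₁) ∈ A → (u₂, y₂) ∈ A →
    ⟪u₁ - u₂, y₁ - y₂⟫ ≥ μ * ‖u₁ - u₂‖ ^ 2

/-- `A` has incremental secant gain `γ` (is `1/γ`-output strictly incrementally
positive, i.e. `(1/γ)`-cocoercive). -/
def HasSecantGain (A : Set (H × H)) (γ : ℝ) : Prop :=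
  ∀ u₁ y₁ u₂ y₂ : H, (u₁, y₁) ∈ A → (u₂, y₂) ∈ A →
    γ * ⟪u₁ - u₂, y₁ - y₂⟫ ≥ ‖y₁ - y₂‖ ^ 2

lemma inv_of_ISP {A : Set (H × H)} {μ : ℝ} (hμ : 0 < μ)
    (h : InputStrictlyPositive A μ) : HasSecantGain (relInv A) (1 / μ) := by
  intro u₁ y₁ u₂ y₂ h₁ h₂
  have := h y₁ u₁ y₂ u₂ h₁ h₂
  rw [real_inner_comm] at this
  rw [ge_iff_le, ← sub_nonneg] at this ⊢
  have hμ' : μ ≠ 0 := ne_of_gt hμ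
  have key : 1/μ * ⟪u₁ - u₂, y₁ - y₂⟫ - ‖y₁ - y₂‖ ^ 2
      = (1/μ) * (⟪u₁ - u₂, y₁ - y₂⟫ - μ * ‖y₁ - y₂‖ ^ 2) := by
    field_simp
    try ring
  rw [key]
  exact mul_nonneg (by positivity) this

lemma inv_of_SG {A : Set (H × H)} {γ : ℝ} (hγ : 0 < γ)
    (h : HasSecantGain A γ) : InputStrictlyPositive (relInv A) (1 / γ) := by
  intro u₁ y₁ u₂ y₂ h₁ h₂
  have := h y₁ u₁ y₂ u₂ h₁ h₂
  rw [real_inner_comm] at this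
  rw [ge_iff_le, ← sub_nonneg] at this ⊢
  have hγ' : γ ≠ 0 := ne_of_gt hγ
  have key : ⟪u₁ - u₂, y₁ - y₂⟫ - 1/γ * ‖u₁ - u₂‖ ^ 2
      = (1/γ) * (γ * ⟪u₁ - u₂, y₁ - y₂⟫ - ‖u₁ - u₂‖ ^ 2) := by
    field_simp
    try ring
  rw [key]
  exact mul_nonneg (by positivity) this

lemma add_ISP {A B : Set (H × H)} {μ ν : ℝ}
    (hA : InputStrictlyPositive A μ) (hB : InputStrictlyPositive B ν) :
    InputStrictlyPositive (relAdd A B) (μ + ν) := by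
  rintro u₁ w₁ u₂ w₂ ⟨y₁, z₁, hy₁, hz₁, rfl⟩ ⟨y₂, z₂, hy₂, hz₂, rfl⟩
  have h1 := hA u₁ y₁ u₂ y₂ hy₁ hy₂
  have h2 := hB u₁ z₁ u₂ z₂ hz₁ hz₂
  have hsplit : (y₁ + z₁) - (y₂ + z₂) = (y₁ - y₂) + (z₁ - z₂) := by abel
  rw [hsplit, inner_add_right]
  nlinarith

lemma add_SG {A B : Set (H × H)} {γ₁ γ₂ : ℝ} (h₁ : 0 < γ₁) (h₂ : 0 < γ₂)
    (hA : HasSecantGain A γ₁) (hB : HasSecantGain B γ₂) :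
    HasSecantGain (relAdd A B) (2 * max γ₁ γ₂) := by
  rintro u₁ w₁ u₂ w₂ ⟨y₁, z₁, hy₁, hz₁, rfl⟩ ⟨y₂, z₂, hy₂, hz₂, rfl⟩
  have hAy := hA u₁ y₁ u₂ y₂ hy₁ hy₂
  have hBz := hB u₁ z₁ u₂ z₂ hz₁ hz₂
  have hip1 : (0:ℝ) ≤ ⟪u₁ - u₂, y₁ - y₂⟫ := by
    nlinarith [sq_nonneg ‖y₁ - y₂‖]
  have hip2 : (0:ℝ) ≤ ⟪u₁ - u₂, z₁ - z₂⟫ := by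
    nlinarith [sq_nonneg ‖z₁ - z₂‖]
  have hsplit : (y₁ + z₁) - (y₂ + z₂) = (y₁ - y₂) + (z₁ - z₂) := by abel
  rw [hsplit, inner_add_right]
  have hn : ‖(y₁ - y₂) + (z₁ - z₂)‖ ≤ ‖y₁ - y₂‖ + ‖z₁ - z₂‖ := norm_add_le _ _
  have hn2 : ‖(y₁ - y₂) + (z₁ - z₂)‖ ^ 2 ≤ 2 * ‖y₁ - y₂‖ ^ 2 + 2 * ‖z₁ - z₂‖ ^ 2 := by
    nlinarith [norm_nonneg ((y₁ - y₂) + (z₁ - z₂)), norm_nonneg (y₁ - y₂),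
      norm_nonneg (z₁ - z₂), sq_nonneg (‖y₁ - y₂‖ - ‖z₁ - z₂‖)]
  have hm1 : γ₁ ≤ max γ₁ γ₂ := le_max_left _ _
  have hm2 : γ₂ ≤ max γ₁ γ₂ := le_max_right _ _
  nlinarith [mul_le_mul_of_nonneg_right hm1 hip1, mul_le_mul_of_nonneg_right hm2 hip2]

theorem truncation_preserves_strict_positivity (n : ℕ)
    (R G C : ℕ → Set (H × H))
    (hG : ∀ j, j < n → ∃ μ > 0, InputStrictlyPositive (G j) μ)
    (hR : ∀ j, j ≤ n → ∃ γ > 0, HasSecantGain (R j) γ)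
    (hCn : C n = R n)
    (hCj : ∀ j, j < n → C j = relAdd (R j) (relInv (relAdd (G j) (relInv (C (j + 1)))))) :
    (∃ γ > 0, HasSecantGain (C 0) γ) ∧
    (∃ μ > 0, InputStrictlyPositive (relInv (C 0)) μ) := by
  have key : ∀ k, k ≤ n → ∃ γ > 0, HasSecantGain (C (n - k)) γ := by
    intro k
    induction k with
    | zero =>
      intro _
      simpa [hCn] using hR n le_rfl
    | succ k ih =>
      intro hk
      have hk' : k ≤ n := Nat.le_of_succ_le hk
      obtain ⟨γ, hγ, hCsg⟩ := ih hk'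
      have hj : n - (k + 1) < n := by omega
      have hjs : n - (k + 1) + 1 = n - k := by omega
      obtain ⟨μ, hμ, hGj⟩ := hG (n - (k + 1)) hj
      obtain ⟨γR, hγR, hRj⟩ := hR (n - (k + 1)) (le_of_lt hj)
      rw [← hjs] at hCsg
      have hinv : InputStrictlyPositive (relInv (C (n - (k + 1) + 1))) (1 / γ) :=
        inv_of_SG hγ hCsg
      have hsum : InputStrictlyPositive
          (relAdd (G (n - (k + 1))) (relInv (C (n - (k + 1) + 1)))) (μ + 1 / γ) :=
        add_ISP hGj hinv
      have hpos : 0 < μ + 1 / γ := by positivity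
      have hinv2 := inv_of_ISP hpos hsum
      have hfinal := add_SG hγR (by positivity : (0:ℝ) < 1 / (μ + 1/γ)) hRj hinv2
      rw [← hCj _ hj] at hfinal
      exact ⟨_, by positivity, hfinal⟩
  obtain ⟨γ, hγ, hsg⟩ := key n le_rfl
  rw [Nat.sub_self] at hsg
  exact ⟨⟨γ, hγ, hsg⟩, ⟨1/γ, by positivity, inv_of_SG hγ hsg⟩⟩
end
end

section
/- Let G, R, S be relations on the real Hilbert space H = L²([0,∞); ℝ). Suppose G is 1-input strictly incrementally positive, R has incremental secant gain λ > 0, and S has incremental secant gain σ > 0. Then the relation (G + (R + S)⁻¹)⁻¹ has incremental secant gain 1/(1 + 1/(λ + σ)). -/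
open MeasureTheory RealInnerProductSpace

noncomputable section

private lemma aux_real (lam σ A p q ny nr ns : ℝ) (hlam : 0 < lam) (hσ : 0 < σ)
    (hA : A ≥ ny ^ 2) (hp : lam * p ≥ nr ^ 2) (hq : σ * q ≥ ns ^ 2)
    (hN : ny ^ 2 ≤ (nr + ns) ^ 2) :
    (lam + σ) / (lam + σ + 1) * (A + (p + q)) ≥ ny ^ 2 := by
  have hc : (0:ℝ) < lam + σ := by linarith
  have hls : (0:ℝ) < lam * σ := mul_pos hlam hσ
  have e1 : σ * nr ^ 2 ≤ lam * σ * p := by nlinarith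
  have e2 : lam * ns ^ 2 ≤ lam * σ * q := by nlinarith
  have e3 : lam * σ * (nr + ns) ^ 2 ≤ (lam + σ) * (σ * nr ^ 2 + lam * ns ^ 2) := by
    nlinarith [sq_nonneg (σ * nr - lam * ns)]
  have e4 : (lam + σ) * (σ * nr ^ 2 + lam * ns ^ 2) ≤ lam * σ * ((lam + σ) * (p + q)) := by
    nlinarith [mul_le_mul_of_nonneg_left e1 hc.le, mul_le_mul_of_nonneg_left e2 hc.le]
  have key : (lam + σ) * (p + q) ≥ ny ^ 2 := by nlinarith
  rw [ge_iff_le, div_mul_eq_mul_div, le_div_iff₀ (by linarith)]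
  nlinarith [mul_le_mul_of_nonneg_left hA hc.le]

theorem unit_recursion_secant_gain (G R S : Set (H × H)) (lam σ : ℝ)
    (hlam : 0 < lam) (hσ : 0 < σ)
    (hG : InputStrictlyPositive G 1)
    (hR : HasSecantGain R lam) (hS : HasSecantGain S σ) :
    HasSecantGain (relInv (relAdd G (relInv (relAdd R S)))) (1 / (1 + 1 / (lam + σ))) := by
  intro u₁ y₁ u₂ y₂ h1 h2
  obtain ⟨a₁, b₁, hG1, hB1, hu1⟩ := h1
  obtain ⟨a₂, b₂, hG2, hB2, hu2⟩ := h2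
  obtain ⟨r₁, s₁, hR1, hS1, hy1⟩ := hB1
  obtain ⟨r₂, s₂, hR2, hS2, hy2⟩ := hB2
  simp only at hu1 hu2 hy1 hy2
  have hGi := hG y₁ a₁ y₂ a₂ hG1 hG2
  have hRi := hR b₁ r₁ b₂ r₂ hR1 hR2
  have hSi := hS b₁ s₁ b₂ s₂ hS1 hS2
  have hsplit : ⟪u₁ - u₂, y₁ - y₂⟫ = ⟪a₁ - a₂, y₁ - y₂⟫ + (⟪b₁ - b₂, r₁ - r₂⟫ + ⟪b₁ - b₂, s₁ - s₂⟫) := by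
    rw [hu1, hu2, add_sub_add_comm, inner_add_left]
    congr 1
    rw [hy1, hy2, add_sub_add_comm, inner_add_right]
  have hA : ⟪a₁ - a₂, y₁ - y₂⟫ ≥ ‖y₁ - y₂‖ ^ 2 := by
    rw [real_inner_comm]; linarith
  have hN : ‖y₁ - y₂‖ ^ 2 ≤ (‖r₁ - r₂‖ + ‖s₁ - s₂‖) ^ 2 := by
    have h : ‖y₁ - y₂‖ ≤ ‖r₁ - r₂‖ + ‖s₁ - s₂‖ := by
      rw [hy1, hy2, add_sub_add_comm]; exact norm_add_le _ _
    have h0 := norm_nonneg (y₁ - y₂)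
    nlinarith
  have hγ : 1 / (1 + 1 / (lam + σ)) = (lam + σ) / (lam + σ + 1) := by
    have hc : (0:ℝ) < lam + σ := by linarith
    field_simp
  rw [hγ, hsplit]
  exact aux_real lam σ _ _ _ _ _ _ hlam hσ hA hRi hSi hN
end
end

section
/- Let C and Ĉ be relations on the real Hilbert space H = L²([0,∞); ℝ), both with incremental secant gain μ > 0. Then for all u₁, u₂ ∈ H, y₁ ∈ C(u₁), y₂ ∈ C(u₂), ŷ₁ ∈ Ĉ(u₁), ŷ₂ ∈ Ĉ(u₂), the error increments satisfy ‖(y₁−ŷ₁) − (y₂−ŷ₂)‖ ≤ μ‖u₁−u₂‖; that is, the error relation C − Ĉ has incremental gain bound μ. -/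
open MeasureTheory RealInnerProductSpace

noncomputable section

/-- If `0 < μ` and `μ⟪u,a⟫ ≥ ‖a‖²` then `‖a - (μ/2)•u‖ ≤ (μ/2)‖u‖`. -/
lemma shift_bound (u a : H) (μ : ℝ) (hμ : 0 < μ) (h : μ * ⟪u, a⟫ ≥ ‖a‖ ^ 2) :
    ‖a - (μ / 2) • u‖ ≤ (μ / 2) * ‖u‖ := by
  have key : ‖a - (μ / 2) • u‖ ^ 2 ≤ ((μ / 2) * ‖u‖) ^ 2 := by
    rw [@norm_sub_sq_real H _ _ a ((μ / 2) • u), real_inner_smul_right, norm_smul]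
    have hcomm : ⟪a, u⟫ = ⟪u, a⟫ := real_inner_comm u a
    have e1 : (‖(μ/2 : ℝ)‖ * ‖u‖) ^ 2 = (μ/2 * ‖u‖) ^ 2 := by
      rw [mul_pow, mul_pow, Real.norm_eq_abs, sq_abs]
    rw [hcomm, e1]
    nlinarith [h]
  have hc : (0:ℝ) ≤ (μ / 2) * ‖u‖ := by positivity
  nlinarith [norm_nonneg (a - (μ / 2) • u), key, hc]

theorem error_relation_gain_bound (C Chat : Set (H × H)) (μ : ℝ) (hμ : 0 < μ)
    (hC : HasSecantGain C μ) (hChat : HasSecantGain Chat μ) :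
    ∀ u₁ u₂ y₁ y₂ yh₁ yh₂ : H, (u₁, y₁) ∈ C → (u₂, y₂) ∈ C →
      (u₁, yh₁) ∈ Chat → (u₂, yh₂) ∈ Chat →
      ‖(y₁ - yh₁) - (y₂ - yh₂)‖ ≤ μ * ‖u₁ - u₂‖ := by
  intro u₁ u₂ y₁ y₂ yh₁ yh₂ h1 h2 h3 h4
  have hA := shift_bound (u₁ - u₂) (y₁ - y₂) μ hμ (hC u₁ y₁ u₂ y₂ h1 h2)
  have hB := shift_bound (u₁ - u₂) (yh₁ - yh₂) μ hμ (hChat u₁ yh₁ u₂ yh₂ h3 h4)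
  have heq : (y₁ - yh₁) - (y₂ - yh₂)
      = ((y₁ - y₂) - (μ / 2) • (u₁ - u₂)) - ((yh₁ - yh₂) - (μ / 2) • (u₁ - u₂)) := by
    abel
  rw [heq]
  calc ‖((y₁ - y₂) - (μ / 2) • (u₁ - u₂)) - ((yh₁ - yh₂) - (μ / 2) • (u₁ - u₂))‖
      ≤ ‖(y₁ - y₂) - (μ / 2) • (u₁ - u₂)‖ + ‖(yh₁ - yh₂) - (μ / 2) • (u₁ - u₂)‖ :=
        norm_sub_le _ _
    _ ≤ (μ / 2) * ‖u₁ - u₂‖ + (μ / 2) * ‖u₁ - u₂‖ := add_le_add hA hB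
    _ = μ * ‖u₁ - u₂‖ := by ring
end
end

section
/- Let f : ℝ → ℝ satisfy f(0) = 0 and the incremental sector bound μ(a−b)² ≤ (a−b)(f(a)−f(b)) ≤ λ(a−b)² for all a, b ∈ ℝ, where 0 ≤ μ ≤ λ. Set c := (μ+λ)/2 and r := (λ−μ)/2. Then f is Lipschitz with constant λ, so composition with f defines a map F on the real Hilbert space H = L²([0,∞); ℝ) by F(u) := f ∘ u, and F satisfies ‖F(u₁) − F(u₂) − c(u₁−u₂)‖ ≤ r‖u₁−u₂‖ for all u₁, u₂ ∈ H; equivalently, the Scaled Relative Graph of F is contained in the closed disc of center c and radius r on the real axis. -/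
open MeasureTheory RealInnerProductSpace

noncomputable section

lemma scalar_key (f : ℝ → ℝ) (μ lam : ℝ) (hμlam : μ ≤ lam)
    (hsec : ∀ a b : ℝ, μ * (a - b) ^ 2 ≤ (a - b) * (f a - f b) ∧
      (a - b) * (f a - f b) ≤ lam * (a - b) ^ 2) (a b : ℝ) :
    |f a - f b - ((μ + lam) / 2) * (a - b)| ≤ ((lam - μ) / 2) * |a - b| := by
  rcases eq_or_ne a b with rfl | hab
  · simp
  have hd : (a - b) ≠ 0 := sub_ne_zero.mpr hab
  obtain ⟨h1, h2⟩ := hsec a b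
  have key : (f a - f b - ((μ + lam) / 2) * (a - b))^2 ≤ (((lam - μ) / 2) * |a - b|)^2 := by
    have hprod : 0 ≤ ((a - b) * (f a - f b) - μ * (a - b)^2) *
        (lam * (a - b)^2 - (a - b) * (f a - f b)) :=
      mul_nonneg (by linarith) (by linarith)
    have hd2 : (0:ℝ) < (a - b)^2 := by positivity
    have hq : (f a - f b)^2 - (μ + lam) * (a - b) * (f a - f b) + μ * lam * (a - b)^2 ≤ 0 := by
      have h0 : (a - b)^2 * ((f a - f b)^2 - (μ + lam) * (a - b) * (f a - f b)
          + μ * lam * (a - b)^2) ≤ (a - b)^2 * 0 := by nlinarith [hprod]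
      exact le_of_mul_le_mul_left h0 hd2
    rw [mul_pow, sq_abs]
    nlinarith [hq]
  have h := Real.sqrt_le_sqrt key
  rwa [Real.sqrt_sq_eq_abs,
    Real.sqrt_sq (mul_nonneg (by linarith) (abs_nonneg _))] at h

theorem sector_bounded_nonlinearity (f : ℝ → ℝ) (μ lam : ℝ) (hμ : 0 ≤ μ) (hμlam : μ ≤ lam)
    (hf0 : f 0 = 0)
    (hsec : ∀ a b : ℝ, μ * (a - b) ^ 2 ≤ (a - b) * (f a - f b) ∧
      (a - b) * (f a - f b) ≤ lam * (a - b) ^ 2) :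
    ∃ hf : LipschitzWith lam.toNNReal f,
      (∀ u₁ u₂ : H,
        ‖hf.compLp hf0 u₁ - hf.compLp hf0 u₂ - ((μ + lam) / 2) • (u₁ - u₂)‖ ≤
          ((lam - μ) / 2) * ‖u₁ - u₂‖) ∧
      SRG {p : H × H | p.2 = hf.compLp hf0 p.1} ⊆
        {z : ℂ | ‖z - (((μ + lam) / 2 : ℝ) : ℂ)‖ ≤ (lam - μ) / 2} := by
  have hlam0 : 0 ≤ lam := le_trans hμ hμlam
  set c : ℝ := (μ + lam) / 2 with hc
  set r : ℝ := (lam - μ) / 2 with hr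
  have hc0 : 0 ≤ c := by positivity
  have hr0 : 0 ≤ r := by simp only [hr]; linarith
  have hkey := scalar_key f μ lam hμlam hsec
  -- Lipschitz
  have hf : LipschitzWith lam.toNNReal f := by
    apply LipschitzWith.of_dist_le_mul
    intro a b
    rw [Real.dist_eq, Real.dist_eq, Real.coe_toNNReal lam hlam0]
    calc |f a - f b| = |(f a - f b - c * (a - b)) + c * (a - b)| := by ring_nf
      _ ≤ |f a - f b - c * (a - b)| + |c * (a - b)| := abs_add_le _ _
      _ ≤ r * |a - b| + c * |a - b| := by
          rw [abs_mul, abs_of_nonneg hc0]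
          exact add_le_add_left (hkey a b) _
      _ = lam * |a - b| := by rw [hc, hr]; ring
  refine ⟨hf, ?_⟩
  -- the auxiliary Lipschitz function g = f - c • id
  set g : ℝ → ℝ := fun x => f x - c * x with hgdef
  have hg : LipschitzWith r.toNNReal g := by
    apply LipschitzWith.of_dist_le_mul
    intro a b
    rw [Real.dist_eq, Real.dist_eq, Real.coe_toNNReal r hr0]
    have := hkey a b
    calc |g a - g b| = |f a - f b - c * (a - b)| := by simp only [hgdef]; ring_nf
      _ ≤ r * |a - b| := hkey a b
  have hg0 : g 0 = 0 := by simp [hgdef, hf0]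
  -- the key norm bound
  have hbound : ∀ u₁ u₂ : H,
      ‖hf.compLp hf0 u₁ - hf.compLp hf0 u₂ - c • (u₁ - u₂)‖ ≤ r * ‖u₁ - u₂‖ := by
    intro u₁ u₂
    have heq : hf.compLp hf0 u₁ - hf.compLp hf0 u₂ - c • (u₁ - u₂) =
        hg.compLp hg0 u₁ - hg.compLp hg0 u₂ := by
      apply Lp.ext
      filter_upwards [hf.coeFn_compLp hf0 u₁, hf.coeFn_compLp hf0 u₂,
        hg.coeFn_compLp hg0 u₁, hg.coeFn_compLp hg0 u₂,
        Lp.coeFn_sub (hf.compLp hf0 u₁) (hf.compLp hf0 u₂),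
        Lp.coeFn_sub (hf.compLp hf0 u₁ - hf.compLp hf0 u₂) (c • (u₁ - u₂)),
        Lp.coeFn_sub (hg.compLp hg0 u₁) (hg.compLp hg0 u₂),
        Lp.coeFn_smul c (u₁ - u₂), Lp.coeFn_sub u₁ u₂] with t h1 h2 h3 h4 h5 h6 h7 h8 h9
      simp only [h6, Pi.sub_apply, h5, h8, h7, Pi.smul_apply, h9, h1, h2, h3, h4,
        Function.comp_apply, smul_eq_mul, hgdef]
      ring
    rw [heq]
    have := hg.norm_compLp_sub_le hg0 u₁ u₂
    rwa [Real.coe_toNNReal r hr0] at this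
  refine ⟨hbound, ?_⟩
  -- SRG containment
  rintro z ⟨u₁, u₂, y₁, y₂, hne, hy₁, hy₂, habs, hre⟩
  simp only [Set.mem_setOf_eq] at hy₁ hy₂ ⊢
  subst hy₁; subst hy₂
  set d : H := u₁ - u₂ with hd
  have hdnorm : (0:ℝ) < ‖d‖ := by
    rw [norm_pos_iff]
    exact sub_ne_zero.mpr hne
  have hb := hbound u₁ u₂
  have hb2 : ‖hf.compLp hf0 u₁ - hf.compLp hf0 u₂ - c • d‖ ^ 2 ≤ (r * ‖d‖) ^ 2 := by
    apply pow_le_pow_left₀ (norm_nonneg _) hb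
  set Dy : H := hf.compLp hf0 u₁ - hf.compLp hf0 u₂ with hDy
  have hexp : ‖Dy - c • d‖ ^ 2 = ‖Dy‖ ^ 2 - 2 * c * ⟪d, Dy⟫ + c ^ 2 * ‖d‖ ^ 2 := by
    rw [norm_sub_sq_real, real_inner_smul_right, norm_smul, real_inner_comm]
    rw [mul_pow]
    simp [Real.norm_eq_abs, abs_of_nonneg hc0]
    ring
  have hDynorm : ‖Dy‖ ^ 2 = ‖z‖ ^ 2 * ‖d‖ ^ 2 := by
    rw [← habs]; ring
  have hinner : ⟪d, Dy⟫ = z.re * ‖d‖ ^ 2 := hre.symm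
  have hd2pos : (0:ℝ) < ‖d‖ ^ 2 := by positivity
  have hineq : ‖z‖ ^ 2 - 2 * c * z.re + c ^ 2 ≤ r ^ 2 := by
    have h1 : (‖z‖ ^ 2 - 2 * c * z.re + c ^ 2) * ‖d‖ ^ 2 ≤ r ^ 2 * ‖d‖ ^ 2 := by
      calc (‖z‖ ^ 2 - 2 * c * z.re + c ^ 2) * ‖d‖ ^ 2
          = ‖Dy‖ ^ 2 - 2 * c * ⟪d, Dy⟫ + c ^ 2 * ‖d‖ ^ 2 := by
            rw [hDynorm, hinner]; ring
        _ = ‖Dy - c • d‖ ^ 2 := hexp.symm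
        _ ≤ (r * ‖d‖) ^ 2 := hb2
        _ = r ^ 2 * ‖d‖ ^ 2 := by ring
    exact le_of_mul_le_mul_right h1 hd2pos
  have habs2 : ‖z - (c : ℂ)‖ ^ 2 ≤ r ^ 2 := by
    rw [Complex.sq_norm, Complex.normSq_apply]
    have hz : ‖z‖ ^ 2 = z.re ^ 2 + z.im ^ 2 := by
      rw [Complex.sq_norm, Complex.normSq_apply]; ring
    simp only [Complex.sub_re, Complex.sub_im, Complex.ofReal_re, Complex.ofReal_im]
    nlinarith [hineq, hz]
  have := Real.sqrt_le_sqrt habs2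
  rwa [Real.sqrt_sq (norm_nonneg _), Real.sqrt_sq hr0] at this
end
end

section
/- Let A and B be relations on the real Hilbert space H = L²([0,∞); ℝ). Fix u₁ ≠ u₂ in H, y₁ ∈ A(u₁), y₂ ∈ A(u₂), w₁ ∈ B(u₁), w₂ ∈ B(u₂), and write Δu = u₁−u₂, Δy = y₁−y₂, Δw = w₁−w₂. Let z_A, z_B, z ∈ ℂ be any complex numbers with nonnegative imaginary part satisfying |z_A|‖Δu‖ = ‖Δy‖, (Re z_A)‖Δu‖² = ⟪Δu, Δy⟫, |z_B|‖Δu‖ = ‖Δw‖, (Re z_B)‖Δu‖² = ⟪Δu, Δw⟫, |z|‖Δu‖ = ‖Δy+Δw‖, and (Re z)‖Δu‖² = ⟪Δu, Δy+Δw⟫. Then z or its complex conjugate lies in the set {z_A, conj(z_A)} + [z_B, conj(z_B)], where [z₁, z₂] denotes the line segment {αz₁ + (1−α)z₂ : α ∈ [0,1]}. -/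
open MeasureTheory RealInnerProductSpace

noncomputable section

open Pointwise

/-- The line segment `[z₁, z₂] = {αz₁ + (1−α)z₂ : α ∈ [0,1]}` in `ℂ`. -/
def seg (z₁ z₂ : ℂ) : Set ℂ :=
  {w | ∃ α : ℝ, α ∈ Set.Icc (0:ℝ) 1 ∧ w = (α : ℂ) * z₁ + ((1 : ℂ) - (α : ℂ)) * z₂}

lemma im_mul_norm_eq {E : Type*} [NormedAddCommGroup E] [InnerProductSpace ℝ E]
    (u v : E) (w : ℂ) (hu : u ≠ 0) (him : 0 ≤ w.im)
    (h1 : ‖w‖ * ‖u‖ = ‖v‖) (h2 : w.re * ‖u‖ ^ 2 = ⟪u, v⟫) :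
    w.im * ‖u‖ = ‖v - w.re • u‖ := by
  have hd : 0 < ‖u‖ := norm_pos_iff.2 hu
  have hperp : ⟪w.re • u, v - w.re • u⟫ = 0 := by
    rw [real_inner_smul_left, inner_sub_right, real_inner_smul_right,
      real_inner_self_eq_norm_sq, ← h2]
    ring
  have hdecomp : ‖v‖ ^ 2 = (w.re * ‖u‖) ^ 2 + ‖v - w.re • u‖ ^ 2 := by
    have hv : v = w.re • u + (v - w.re • u) := by abel
    calc ‖v‖ ^ 2 = ‖w.re • u + (v - w.re • u)‖ ^ 2 := by rw [← hv]
    _ = ‖w.re • u‖ ^ 2 + 2 * ⟪w.re • u, v - w.re • u⟫ + ‖v - w.re • u‖ ^ 2 :=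
        norm_add_sq_real _ _
    _ = (w.re * ‖u‖) ^ 2 + ‖v - w.re • u‖ ^ 2 := by
        rw [hperp, norm_smul]
        simp [mul_pow, sq_abs]
  have habs : ‖w‖ ^ 2 = w.re ^ 2 + w.im ^ 2 := by
    rw [Complex.sq_norm, Complex.normSq_apply]; ring
  have hsq : (w.im * ‖u‖) ^ 2 = ‖v - w.re • u‖ ^ 2 := by
    have h1' : (‖w‖ * ‖u‖) ^ 2 = ‖v‖ ^ 2 := by rw [h1]
    nlinarith [h1', hdecomp, habs]
  have h0 : 0 ≤ w.im * ‖u‖ := mul_nonneg him hd.le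
  nlinarith [norm_nonneg (v - w.re • u), hsq, h0]

theorem pointwise_srg_sum_rule (A B : Set (H × H))
    (u₁ u₂ y₁ y₂ w₁ w₂ : H) (hu : u₁ ≠ u₂)
    (hy₁ : (u₁, y₁) ∈ A) (hy₂ : (u₂, y₂) ∈ A)
    (hw₁ : (u₁, w₁) ∈ B) (hw₂ : (u₂, w₂) ∈ B)
    (zA zB z : ℂ) (hzA : 0 ≤ zA.im) (hzB : 0 ≤ zB.im) (hz : 0 ≤ z.im)
    (hzA1 : ‖zA‖ * ‖u₁ - u₂‖ = ‖y₁ - y₂‖)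
    (hzA2 : zA.re * ‖u₁ - u₂‖ ^ 2 = ⟪u₁ - u₂, y₁ - y₂⟫)
    (hzB1 : ‖zB‖ * ‖u₁ - u₂‖ = ‖w₁ - w₂‖)
    (hzB2 : zB.re * ‖u₁ - u₂‖ ^ 2 = ⟪u₁ - u₂, w₁ - w₂⟫)
    (hz1 : ‖z‖ * ‖u₁ - u₂‖ = ‖(y₁ - y₂) + (w₁ - w₂)‖)
    (hz2 : z.re * ‖u₁ - u₂‖ ^ 2 = ⟪u₁ - u₂, (y₁ - y₂) + (w₁ - w₂)⟫) :
    z ∈ ({zA, starRingEnd ℂ zA} : Set ℂ) + seg zB (starRingEnd ℂ zB) ∨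
      starRingEnd ℂ z ∈ ({zA, starRingEnd ℂ zA} : Set ℂ) + seg zB (starRingEnd ℂ zB) := by
  set Δu := u₁ - u₂ with hΔu
  have hΔu0 : Δu ≠ 0 := sub_ne_zero.2 hu
  have hd : 0 < ‖Δu‖ := norm_pos_iff.2 hΔu0
  -- z.re = zA.re + zB.re
  have hre : z.re = zA.re + zB.re := by
    have h : z.re * ‖Δu‖ ^ 2 = (zA.re + zB.re) * ‖Δu‖ ^ 2 := by
      rw [hz2, inner_add_right, ← hzA2, ← hzB2]; ring
    have hd2 : (0:ℝ) < ‖Δu‖ ^ 2 := by positivity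
    exact mul_right_cancel₀ (ne_of_gt hd2) h
  have hA := im_mul_norm_eq Δu (y₁ - y₂) zA hΔu0 hzA hzA1 hzA2
  have hB := im_mul_norm_eq Δu (w₁ - w₂) zB hΔu0 hzB hzB1 hzB2
  have hZ := im_mul_norm_eq Δu ((y₁ - y₂) + (w₁ - w₂)) z hΔu0 hz hz1 hz2
  set P := (y₁ - y₂) - zA.re • Δu with hP
  set Q := (w₁ - w₂) - zB.re • Δu with hQ
  have hPQ : (y₁ - y₂) + (w₁ - w₂) - z.re • Δu = P + Q := by
    rw [hre, add_smul, hP, hQ]; abel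
  rw [hPQ] at hZ
  -- triangle inequalities
  have ht1 : ‖P + Q‖ ≤ ‖P‖ + ‖Q‖ := norm_add_le _ _
  have ht2 : ‖P‖ - ‖Q‖ ≤ ‖P + Q‖ := by
    have h := norm_sub_le (P + Q) Q
    have hPeq : P + Q - Q = P := by abel
    rw [hPeq] at h; linarith
  -- imaginary part inequalities
  have hi1 : z.im ≤ zA.im + zB.im := by
    have h : z.im * ‖Δu‖ ≤ (zA.im + zB.im) * ‖Δu‖ := by
      rw [hZ, add_mul, hA, hB]; exact ht1
    exact le_of_mul_le_mul_right h hd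
  have hi2 : zA.im - zB.im ≤ z.im := by
    have h : (zA.im - zB.im) * ‖Δu‖ ≤ z.im * ‖Δu‖ := by
      rw [hZ, sub_mul, hA, hB]; exact ht2
    exact le_of_mul_le_mul_right h hd
  left
  rw [Set.mem_add]
  rcases eq_or_lt_of_le hzB with hB0 | hB0
  · -- zB.im = 0 : z = zA + zB
    refine ⟨zA, Or.inl rfl, zB, ⟨1, ⟨zero_le_one, le_refl 1⟩, by push_cast; ring⟩, ?_⟩
    have him : z.im = zA.im := by
      have : zB.im = 0 := hB0.symm
      rw [this] at hi1 hi2; linarith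
    apply Complex.ext
    · simp [hre]
    · simp [him, ← hB0]
  · -- zB.im > 0
    set α : ℝ := (z.im - zA.im + zB.im) / (2 * zB.im) with hα
    have hα0 : 0 ≤ α := by
      apply div_nonneg _ (by linarith)
      linarith
    have hα1 : α ≤ 1 := by
      rw [div_le_one (by linarith)]
      linarith
    refine ⟨zA, Or.inl rfl, (α : ℂ) * zB + ((1 : ℂ) - (α : ℂ)) * starRingEnd ℂ zB,
      ⟨α, ⟨hα0, hα1⟩, rfl⟩, ?_⟩
    apply Complex.ext
    · simp [Complex.add_re, Complex.mul_re, hre]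
      ring
    · simp [Complex.add_im, Complex.mul_im]
      field_simp [hα]
      have hαm : α * (2 * zB.im) = z.im - zA.im + zB.im := by
        rw [hα]; exact div_mul_cancel₀ _ (mul_pos two_pos hB0).ne'
      linear_combination hαm
end
end
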